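/- Let k be an algebraically closed field of characteristic zero and V a finite-dimensional k-vector space. The map sending an unordered n-tuple [x₁,…,xₙ] of points of V to the tuple (c₁,…,cₙ), where cᵢ ∈ SⁱV is the i-th elementary symmetric polynomial in x₁,…,xₙ, is a closed embedding of the Chow variety Chowⁿ(V) = Vⁿ/𝔖ₙ into V × S²V × ⋯ × SⁿV. -/

import Mathlib

/-!
STATEMENT 4: For `k` algebraically closed of characteristic zero and `V` a `d`-dimensional
`k`-vector space, the map `[x₁,…,xₙ] ↦ (c₁,…,cₙ)`, with `cᵢ ∈ SⁱV` the `i`-th elementary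
symmetric polynomial of `x₁,…,xₙ ∈ V`, is a closed embedding
`Chowⁿ(V) = Vⁿ/𝔖ₙ ↪ V × S²V × ⋯ × SⁿV`.

Scheme-theoretically, `Chowⁿ(V) = Spec k[Vⁿ]^{𝔖ₙ}`, and the morphism being a closed
immersion means exactly that the corresponding `k`-algebra homomorphism
`k[V × S²V × ⋯ × SⁿV] → k[Vⁿ]^{𝔖ₙ}` is surjective, i.e. that the invariant ring
`k[Vⁿ]^{𝔖ₙ}` is generated as a `k`-algebra by the coordinates of `c₁,…,cₙ`
(it always contains them).  This is the form in which we state the theorem.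

Concretely, `k[Vⁿ] = k[x_{j,l} : j ∈ Fin n, l ∈ Fin d]`, the symmetric algebra `S(V)` is
`k[u₁,…,u_d]`, the point `x_j` corresponds to the generic linear form
`ℓ_j = ∑_l x_{j,l} u_l`, and `cᵢ = eᵢ(ℓ₁,…,ℓₙ) ∈ SⁱV`; its coordinates are the
coefficients of `cᵢ` as a polynomial in `u₁,…,u_d`.
-/

open MvPolynomial

/-- The `𝔖ₙ`-invariants of `k[Vⁿ]` for `V = k^d`: the coordinate ring of `Chowⁿ(V)`. -/
noncomputable def chowInvariants (k : Type*) [CommSemiring k] (n d : ℕ) :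
    Subalgebra k (MvPolynomial (Fin n × Fin d) k) where
  carrier := {p | ∀ σ : Equiv.Perm (Fin n), rename (fun q => (σ q.1, q.2)) p = p}
  mul_mem' {a b} ha hb := fun σ => by rw [map_mul, ha σ, hb σ]
  add_mem' {a b} ha hb := fun σ => by rw [map_add, ha σ, hb σ]
  one_mem' := fun σ => by rw [map_one]
  zero_mem' := fun σ => by rw [map_zero]
  algebraMap_mem' r := fun σ => by
    simp [MvPolynomial.algebraMap_eq, rename_C]

/-- The generic linear form `ℓ_j = ∑_l x_{j,l} u_l ∈ S(V) ⊗ k[Vⁿ]`, the "universal point"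
`x_j ∈ V` viewed inside the symmetric algebra `S(V) = k[u,…]` with coefficients in
`k[Vⁿ]`. -/
noncomputable def genericLinearForm (k : Type*) [CommSemiring k] (n d : ℕ) (j : Fin n) :
    MvPolynomial (Fin d) (MvPolynomial (Fin n × Fin d) k) :=
  ∑ l : Fin d, MvPolynomial.C (MvPolynomial.X (j, l)) * MvPolynomial.X l

/-- The `i`-th elementary symmetric polynomial `cᵢ = eᵢ(ℓ₁,…,ℓₙ) ∈ SⁱV ⊗ k[Vⁿ]` of the
universal points. -/
noncomputable def chowESymm (k : Type*) [CommSemiring k] (n d : ℕ) (i : ℕ) :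
    MvPolynomial (Fin d) (MvPolynomial (Fin n × Fin d) k) :=
  ((Finset.univ.val : Multiset (Fin n)).map (genericLinearForm k n d)).esymm i

namespace ChowAux

/-! ### Auxiliary machinery -/

/-- Polarized power sum `∑_j x_j^a`. -/
noncomputable def polSum (k : Type*) [CommSemiring k] (n d : ℕ) (a : Fin d → ℕ) :
    MvPolynomial (Fin n × Fin d) k :=
  ∑ j : Fin n, ∏ l : Fin d, X (j, l) ^ a l

/-- Symmetrization of a product of monomials. -/
noncomputable def symT (k : Type*) [CommSemiring k] (n d : ℕ) (ν : Fin n → Fin d → ℕ) :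
    MvPolynomial (Fin n × Fin d) k :=
  ∑ σ : Equiv.Perm (Fin n), ∏ j : Fin n, ∏ l : Fin d, X (σ j, l) ^ ν j l

section CommSemiringLemmas

variable (k : Type*) [CommSemiring k] (n d : ℕ)

lemma symT_comp_perm (ν : Fin n → Fin d → ℕ) (τ : Equiv.Perm (Fin n)) :
    symT k n d (fun j => ν (τ j)) = symT k n d ν := by
  unfold symT
  refine Fintype.sum_equiv (Equiv.mulRight τ⁻¹) _ _ (fun σ => ?_)
  rw [← Equiv.prod_comp τ
    (fun j => ∏ l, (X ((Equiv.mulRight τ⁻¹ σ) j, l) : MvPolynomial (Fin n × Fin d) k) ^ ν j l)]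
  refine Finset.prod_congr rfl fun j _ => ?_
  simp [Equiv.Perm.mul_apply]

lemma polSum_mul_symT (a : Fin d → ℕ) (ν : Fin n → Fin d → ℕ) :
    polSum k n d a * symT k n d ν
      = ∑ j : Fin n, symT k n d (Function.update ν j (ν j + a)) := by
  unfold polSum symT
  rw [Finset.sum_mul_sum, Finset.sum_comm]
  conv_rhs => rw [Finset.sum_comm]
  refine Finset.sum_congr rfl fun σ _ => ?_
  rw [← Equiv.sum_comp σ (fun m => (∏ l, (X (m, l) : MvPolynomial (Fin n × Fin d) k) ^ a l) *
      ∏ j', ∏ l, X (σ j', l) ^ ν j' l)]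
  refine Finset.sum_congr rfl fun j _ => ?_
  have hupd : (fun j' => ∏ l, (X (σ j', l) : MvPolynomial (Fin n × Fin d) k)
        ^ Function.update ν j (ν j + a) j' l)
      = Function.update (fun j' => ∏ l, (X (σ j', l) : MvPolynomial (Fin n × Fin d) k) ^ ν j' l)
          j ((∏ l, X (σ j, l) ^ a l) * ∏ l, X (σ j, l) ^ ν j l) := by
    funext j'
    rcases eq_or_ne j' j with rfl | h
    · simp only [Function.update_self, Pi.add_apply, pow_add, Finset.prod_mul_distrib]
      ring
    · simp [Function.update_of_ne h]
  rw [hupd, Finset.prod_update_of_mem (Finset.mem_univ j), Finset.sdiff_singleton_eq_erase,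
    mul_assoc, Finset.mul_prod_erase Finset.univ
      (fun j' => ∏ l, (X (σ j', l) : MvPolynomial (Fin n × Fin d) k) ^ ν j' l)
      (Finset.mem_univ j)]

/-- Rename of a monomial is a term of `symT`. -/
lemma rename_monomial_eq (σ : Equiv.Perm (Fin n)) (μ : (Fin n × Fin d) →₀ ℕ) (c : k) :
    rename (fun q : Fin n × Fin d => (σ q.1, q.2)) (monomial μ c)
      = C c * ∏ j : Fin n, ∏ l : Fin d, X (σ j, l) ^ μ (j, l) := by
  rw [monomial_eq, map_mul, rename_C, Finsupp.prod_pow, map_prod]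
  congr 1
  rw [← Fintype.prod_prod_type (f := fun q : Fin n × Fin d =>
    (X (σ q.1, q.2) : MvPolynomial (Fin n × Fin d) k) ^ μ q)]
  exact Finset.prod_congr rfl fun q _ => by rw [map_pow, rename_X]

/-- The subalgebra of polynomials in `u` all of whose coefficients lie in `A`. -/
noncomputable def coeffAlg (A : Subalgebra k (MvPolynomial (Fin n × Fin d) k)) :
    Subalgebra k (MvPolynomial (Fin d) (MvPolynomial (Fin n × Fin d) k)) where
  carrier := {p | ∀ m : Fin d →₀ ℕ, coeff m p ∈ A}
  mul_mem' {a b} ha hb := fun m => by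
    rw [coeff_mul]
    exact A.sum_mem fun x _ => A.mul_mem (ha _) (hb _)
  add_mem' {a b} ha hb := fun m => by
    rw [coeff_add]; exact A.add_mem (ha m) (hb m)
  one_mem' := fun m => by
    rw [coeff_one]
    split_ifs <;> [exact A.one_mem; exact A.zero_mem]
  zero_mem' := fun m => by rw [coeff_zero]; exact A.zero_mem
  algebraMap_mem' r := fun m => by
    have : (algebraMap k (MvPolynomial (Fin d) (MvPolynomial (Fin n × Fin d) k)) r)
        = C (algebraMap k (MvPolynomial (Fin n × Fin d) k) r) := rfl
    rw [this, coeff_C]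
    split_ifs <;> [exact A.algebraMap_mem r; exact A.zero_mem]

variable {k n d}

lemma prod_X_pow_eq_monomial' (f : Fin d → ℕ) :
    (∏ l : Fin d, (X l : MvPolynomial (Fin d) (MvPolynomial (Fin n × Fin d) k)) ^ f l)
      = monomial (Finsupp.equivFunOnFinite.symm f) 1 := by
  rw [monomial_eq, map_one, one_mul, Finsupp.prod_pow]
  rfl

lemma coeff_genericLinearForm_pow (j : Fin n) (a : Fin d → ℕ) :
    coeff (Finsupp.equivFunOnFinite.symm a) (genericLinearForm k n d j ^ (∑ l, a l))
      = (Nat.multinomial Finset.univ a : MvPolynomial (Fin n × Fin d) k)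
          * ∏ l : Fin d, X (j, l) ^ a l := by
  rw [genericLinearForm, Finset.sum_pow_eq_sum_piAntidiag]
  rw [MvPolynomial.coeff_sum]
  have hterm : ∀ f : Fin d → ℕ,
      coeff (Finsupp.equivFunOnFinite.symm a)
        ((Nat.multinomial Finset.univ f : MvPolynomial (Fin d) (MvPolynomial (Fin n × Fin d) k))
          * ∏ l : Fin d, (C (X (j, l)) * X l) ^ f l)
      = if f = a then (Nat.multinomial Finset.univ a : MvPolynomial (Fin n × Fin d) k)
          * ∏ l : Fin d, X (j, l) ^ f l else 0 := by
    intro f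
    have hprod : (∏ l : Fin d, ((C (X (j, l)) : MvPolynomial (Fin d)
          (MvPolynomial (Fin n × Fin d) k)) * X l) ^ f l)
        = C (∏ l : Fin d, X (j, l) ^ f l) * monomial (Finsupp.equivFunOnFinite.symm f) 1 := by
      rw [← prod_X_pow_eq_monomial', map_prod, ← Finset.prod_mul_distrib]
      refine Finset.prod_congr rfl fun l _ => ?_
      rw [mul_pow, C_pow]
    rw [hprod, ← map_natCast (C : MvPolynomial (Fin n × Fin d) k →+*
        MvPolynomial (Fin d) (MvPolynomial (Fin n × Fin d) k)), ← mul_assoc, ← map_mul,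
      coeff_C_mul, coeff_monomial]
    rcases eq_or_ne f a with rfl | hfa
    · simp
    · have : Finsupp.equivFunOnFinite.symm f ≠ Finsupp.equivFunOnFinite.symm a := by
        intro h
        exact hfa (Finsupp.equivFunOnFinite.symm.injective h)
      rw [if_neg this, if_neg hfa, mul_zero]
  rw [Finset.sum_congr rfl fun f _ => hterm f,
    Finset.sum_eq_single a (fun b _ hba => if_neg hba)
      (fun ha => absurd (Finset.mem_piAntidiag.mpr ⟨rfl, fun l _ => Finset.mem_univ l⟩) ha),
    if_pos rfl]

lemma coeff_sum_genericLinearForm_pow (a : Fin d → ℕ) :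
    coeff (Finsupp.equivFunOnFinite.symm a)
        (∑ j : Fin n, genericLinearForm k n d j ^ (∑ l, a l))
      = (Nat.multinomial Finset.univ a : MvPolynomial (Fin n × Fin d) k) * polSum k n d a := by
  rw [MvPolynomial.coeff_sum, polSum, Finset.mul_sum]
  exact Finset.sum_congr rfl fun j _ => coeff_genericLinearForm_pow j a

/-- A ring homomorphism commutes with `Multiset.esymm`. -/
lemma map_multiset_esymm {R S' : Type*} [CommSemiring R] [CommSemiring S'] (φ : R →+* S')
    (s : Multiset R) (i : ℕ) : φ (s.esymm i) = (s.map φ).esymm i := by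
  rw [Multiset.esymm, Multiset.esymm, map_multiset_sum, Multiset.map_map,
    Multiset.powersetCard_map, Multiset.map_map]
  congr 1
  refine Multiset.map_congr rfl fun t _ => ?_
  exact map_multiset_prod φ t

end CommSemiringLemmas

section FieldLemmas

variable {k : Type*} [Field k] [CharZero k] {n d : ℕ}

lemma symT_mem (A : Subalgebra k (MvPolynomial (Fin n × Fin d) k))
    (hA : ∀ a : Fin d → ℕ, a ≠ 0 → polSum k n d a ∈ A) :
    ∀ (c : ℕ) (ν : Fin n → Fin d → ℕ),
      (Finset.univ.filter fun j => ν j ≠ 0).card ≤ c → symT k n d ν ∈ A := by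
  intro c
  induction c with
  | zero =>
    intro ν hν
    have h0 : ∀ j, ν j = 0 := by
      intro j
      by_contra h
      have : j ∈ Finset.univ.filter fun j => ν j ≠ 0 := by simp [h]
      have := Finset.card_pos.mpr ⟨j, this⟩
      omega
    have : symT k n d ν = (Fintype.card (Equiv.Perm (Fin n)) : MvPolynomial (Fin n × Fin d) k) := by
      unfold symT
      simp [h0]
    rw [this]
    exact A.natCast_mem _
  | succ c IH =>
    intro ν hν
    rcases le_or_gt ((Finset.univ.filter fun j => ν j ≠ 0).card) c with hle | hlt
    · exact IH ν hle
    have hpos : 0 < (Finset.univ.filter fun j => ν j ≠ 0).card := by omega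
    obtain ⟨j₀, hj₀mem⟩ := Finset.card_pos.mp hpos
    have hj₀ : ν j₀ ≠ 0 := (Finset.mem_filter.mp hj₀mem).2
    set a := ν j₀ with ha
    set ν' := Function.update ν j₀ 0 with hν'
    have hfiltν' : (Finset.univ.filter fun j => ν' j ≠ 0)
        = (Finset.univ.filter fun j => ν j ≠ 0).erase j₀ := by
      ext j
      rcases eq_or_ne j j₀ with rfl | h
      · simp [hν', Function.update_self]
      · simp [hν', Function.update_of_ne h, h]
    have hcard' : (Finset.univ.filter fun j => ν' j ≠ 0).card ≤ c := by
      rw [hfiltν', Finset.card_erase_of_mem hj₀mem]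
      omega
    set Z := Finset.univ.filter (fun j => ν' j = 0) with hZ
    have hj₀Z : j₀ ∈ Z := by simp [hZ, hν']
    have key := polSum_mul_symT k n d a ν'
    rw [← Finset.sum_filter_add_sum_filter_not Finset.univ (fun j => ν' j = 0)
      (fun j => symT k n d (Function.update ν' j (ν' j + a)))] at key
    have hZterm : ∀ j ∈ Z, symT k n d (Function.update ν' j (ν' j + a)) = symT k n d ν := by
      intro j hj
      have hj0 : ν' j = 0 := (Finset.mem_filter.mp hj).2
      have hupdate : Function.update ν' j (ν' j + a) = fun x => ν (Equiv.swap j j₀ x) := by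
        funext x
        rcases eq_or_ne x j with rfl | hxj
        · rw [Function.update_self, hj0, zero_add, Equiv.swap_apply_left]
        · rw [Function.update_of_ne hxj]
          rcases eq_or_ne x j₀ with rfl | hxj0
          · have hjx : j ≠ x := fun h => hxj h.symm
            rw [Equiv.swap_apply_right]
            have h1 : ν' x = 0 := Function.update_self x 0 ν
            have h2 : ν j = ν' j := (Function.update_of_ne hjx 0 ν).symm
            rw [h1, h2, hj0]
          · rw [Equiv.swap_apply_of_ne_of_ne hxj hxj0]
            exact Function.update_of_ne hxj0 0 ν
      rw [hupdate]
      exact symT_comp_perm k n d ν (Equiv.swap j j₀)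
    rw [Finset.sum_congr rfl hZterm, Finset.sum_const] at key
    have hZcard : Z.card ≠ 0 := Finset.card_ne_zero_of_mem hj₀Z
    have hrest : ∀ j ∈ Finset.univ.filter (fun j => ¬ ν' j = 0),
        symT k n d (Function.update ν' j (ν' j + a)) ∈ A := by
      intro j hj
      have hjne : ν' j ≠ 0 := (Finset.mem_filter.mp hj).2
      refine IH _ ?_
      have : (Finset.univ.filter fun x => Function.update ν' j (ν' j + a) x ≠ 0)
          = (Finset.univ.filter fun x => ν' x ≠ 0) := by
        ext x
        rcases eq_or_ne x j with rfl | h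
        · simp only [Finset.mem_filter, Finset.mem_univ, true_and, Function.update_self]
          constructor
          · intro _; exact hjne
          · intro _
            intro hc
            apply hjne
            funext l
            have := congrFun hc l
            simp only [Pi.add_apply, Pi.zero_apply] at this ⊢
            omega
        · simp [Function.update_of_ne h]
      rw [this]
      exact hcard'
    have hmem : (Z.card : MvPolynomial (Fin n × Fin d) k) * symT k n d ν ∈ A := by
      have : (Z.card : MvPolynomial (Fin n × Fin d) k) * symT k n d ν
          = polSum k n d a * symT k n d ν'
            - ∑ j ∈ Finset.univ.filter (fun j => ¬ ν' j = 0),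
                symT k n d (Function.update ν' j (ν' j + a)) := by
        rw [key, nsmul_eq_mul]
        ring
      rw [this]
      exact A.sub_mem (A.mul_mem (hA a hj₀) (IH ν' hcard')) (A.sum_mem fun j hj => hrest j hj)
    have : symT k n d ν = ((Z.card : k))⁻¹ •
        ((Z.card : MvPolynomial (Fin n × Fin d) k) * symT k n d ν) := by
      rw [← nsmul_eq_mul, ← Nat.cast_smul_eq_nsmul k, smul_smul, inv_mul_cancel₀, one_smul]
      exact_mod_cast Nat.cast_ne_zero.mpr hZcard
    rw [this]
    exact A.smul_mem hmem _

lemma invariants_le (A : Subalgebra k (MvPolynomial (Fin n × Fin d) k))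
    (hA : ∀ a : Fin d → ℕ, a ≠ 0 → polSum k n d a ∈ A) :
    chowInvariants k n d ≤ A := by
  intro p hp
  have hp' : ∀ σ : Equiv.Perm (Fin n), rename (fun q : Fin n × Fin d => (σ q.1, q.2)) p = p :=
    hp
  have hsum : ∑ σ : Equiv.Perm (Fin n), rename (fun q : Fin n × Fin d => (σ q.1, q.2)) p
      = (Fintype.card (Equiv.Perm (Fin n))) • p := by
    rw [Finset.sum_congr rfl fun σ _ => hp' σ, Finset.sum_const, Finset.card_univ]
  have hexp : ∑ σ : Equiv.Perm (Fin n), rename (fun q : Fin n × Fin d => (σ q.1, q.2)) p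
      = ∑ μ ∈ p.support, C (coeff μ p) * symT k n d (fun j l => μ (j, l)) := by
    have hps : ∀ σ : Equiv.Perm (Fin n), rename (fun q : Fin n × Fin d => (σ q.1, q.2)) p
        = ∑ μ ∈ p.support, C (coeff μ p) * ∏ j : Fin n, ∏ l : Fin d, X (σ j, l) ^ μ (j, l) := by
      intro σ
      conv_lhs => rw [p.as_sum]
      rw [map_sum]
      exact Finset.sum_congr rfl fun μ _ => rename_monomial_eq k n d σ μ _
    rw [Finset.sum_congr rfl fun σ _ => hps σ, Finset.sum_comm]
    refine Finset.sum_congr rfl fun μ _ => ?_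
    rw [symT, Finset.mul_sum]
  have hcard : ((Fintype.card (Equiv.Perm (Fin n)) : k)) ≠ 0 := by
    exact_mod_cast Nat.cast_ne_zero.mpr Fintype.card_ne_zero
  have hmem : (Fintype.card (Equiv.Perm (Fin n))) • p ∈ A := by
    rw [← hsum, hexp]
    refine A.sum_mem fun μ _ => A.mul_mem ?_ ?_
    · exact A.algebraMap_mem _
    · exact symT_mem A hA _ _ le_rfl
  have : p = ((Fintype.card (Equiv.Perm (Fin n)) : k))⁻¹ •
      ((Fintype.card (Equiv.Perm (Fin n))) • p) := by
    rw [← Nat.cast_smul_eq_nsmul k, smul_smul, inv_mul_cancel₀ hcard, one_smul]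
  rw [this]
  exact A.smul_mem hmem _

variable (A : Subalgebra k (MvPolynomial (Fin n × Fin d) k))
  (hgen : ∀ i ∈ Finset.Icc 1 n, ∀ m : Fin d →₀ ℕ, coeff m (chowESymm k n d i) ∈ A)

omit [CharZero k] in
include hgen in
lemma chowESymm_mem : ∀ i : ℕ, chowESymm k n d i ∈ coeffAlg k n d A := by
  intro i
  rcases Nat.eq_zero_or_pos i with rfl | hi
  · have : chowESymm k n d 0 = 1 := by
      simp [chowESymm, Multiset.esymm, Multiset.powersetCard_zero_left]
    rw [this]; exact (coeffAlg k n d A).one_mem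
  rcases le_or_gt i n with hin | hni
  · exact fun m => hgen i (Finset.mem_Icc.mpr ⟨hi, hin⟩) m
  · have : chowESymm k n d i = 0 := by
      rw [chowESymm, Multiset.esymm, Multiset.powersetCard_eq_empty]
      · simp
      · simpa using hni
    rw [this]; exact (coeffAlg k n d A).zero_mem

omit [CharZero k] in
include hgen in
lemma psum_mem : ∀ i : ℕ, 0 < i →
    (∑ j : Fin n, genericLinearForm k n d j ^ i) ∈ coeffAlg k n d A := by
  intro i
  induction i using Nat.strong_induction_on with
  | _ i IH =>
  intro hi
  have hnewton := MvPolynomial.psum_eq_mul_esymm_sub_sum (Fin n)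
    (MvPolynomial (Fin n × Fin d) k) i hi
  have h := congrArg (aeval (genericLinearForm k n d)) hnewton
  simp only [MvPolynomial.psum, map_sum, map_pow, aeval_X, map_sub, map_mul, map_natCast,
    map_neg, map_one, aeval_esymm_eq_multiset_esymm] at h
  rw [show ((Finset.univ.val : Multiset (Fin n)).map (genericLinearForm k n d)).esymm
      = chowESymm k n d from rfl] at h
  rw [h]
  refine Subalgebra.sub_mem _ (Subalgebra.mul_mem _ (Subalgebra.mul_mem _ ?_ ?_)
    (chowESymm_mem A hgen i)) (Subalgebra.sum_mem _ fun a ha => ?_)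
  · exact Subalgebra.pow_mem _ (Subalgebra.neg_mem _ (Subalgebra.one_mem _)) _
  · exact Subalgebra.natCast_mem _ _
  · simp only [Finset.mem_filter, Finset.mem_antidiagonal, Set.mem_Ioo] at ha
    have hsum : a.1 + a.2 = i := by simpa using ha.1
    have h1 := ha.2.1
    have h2 := ha.2.2
    refine Subalgebra.mul_mem _ (Subalgebra.mul_mem _ ?_ (chowESymm_mem A hgen a.1)) ?_
    · exact Subalgebra.pow_mem _ (Subalgebra.neg_mem _ (Subalgebra.one_mem _)) _
    · exact IH a.2 (by omega) (by omega)

include hgen in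
lemma polSum_mem (a : Fin d → ℕ) (ha : a ≠ 0) : polSum k n d a ∈ A := by
  have hi : 0 < ∑ l, a l := by
    rcases Function.ne_iff.mp ha with ⟨l, hl⟩
    have := Finset.single_le_sum (f := a) (fun _ _ => Nat.zero_le _) (Finset.mem_univ l)
    simp only [Pi.zero_apply] at hl
    omega
  have h1 : ∀ m : Fin d →₀ ℕ,
      coeff m (∑ j : Fin n, genericLinearForm k n d j ^ (∑ l, a l)) ∈ A :=
    psum_mem A hgen (∑ l, a l) hi
  have h2 := h1 (Finsupp.equivFunOnFinite.symm a)
  rw [coeff_sum_genericLinearForm_pow] at h2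
  have hN : ((Nat.multinomial Finset.univ a : k)) ≠ 0 :=
    Nat.cast_ne_zero.mpr (Nat.multinomial_pos _ _).ne'
  have : polSum k n d a = ((Nat.multinomial Finset.univ a : k))⁻¹ •
      ((Nat.multinomial Finset.univ a : MvPolynomial (Fin n × Fin d) k) * polSum k n d a) := by
    rw [← nsmul_eq_mul, ← Nat.cast_smul_eq_nsmul k, smul_smul, inv_mul_cancel₀ hN, one_smul]
  rw [this]
  exact A.smul_mem h2 _

end FieldLemmas

section Invariance

variable {k : Type*} [CommSemiring k] {n d : ℕ}

lemma map_rename_genericLinearForm (σ : Equiv.Perm (Fin n)) (j : Fin n) :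
    MvPolynomial.map ((rename (fun q : Fin n × Fin d => (σ q.1, q.2))
        : MvPolynomial (Fin n × Fin d) k →ₐ[k] MvPolynomial (Fin n × Fin d) k)
        : MvPolynomial (Fin n × Fin d) k →+* MvPolynomial (Fin n × Fin d) k)
      (genericLinearForm k n d j) = genericLinearForm k n d (σ j) := by
  rw [genericLinearForm, genericLinearForm, map_sum]
  refine Finset.sum_congr rfl fun l _ => ?_
  rw [map_mul, MvPolynomial.map_C, MvPolynomial.map_X]
  simp [rename_X]

lemma chowESymm_invariant (σ : Equiv.Perm (Fin n)) (i : ℕ) (m : Fin d →₀ ℕ) :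
    rename (fun q : Fin n × Fin d => (σ q.1, q.2)) (coeff m (chowESymm k n d i))
      = coeff m (chowESymm k n d i) := by
  set φ : MvPolynomial (Fin n × Fin d) k →+* MvPolynomial (Fin n × Fin d) k :=
    ((rename (fun q : Fin n × Fin d => (σ q.1, q.2))
      : MvPolynomial (Fin n × Fin d) k →ₐ[k] MvPolynomial (Fin n × Fin d) k)
      : MvPolynomial (Fin n × Fin d) k →+* MvPolynomial (Fin n × Fin d) k) with hφ
  have h1 : rename (fun q : Fin n × Fin d => (σ q.1, q.2)) (coeff m (chowESymm k n d i))
      = coeff m (MvPolynomial.map φ (chowESymm k n d i)) := by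
    rw [coeff_map]; rfl
  rw [h1]
  congr 1
  rw [chowESymm, map_multiset_esymm (MvPolynomial.map φ), Multiset.map_map]
  rw [show ((fun p => MvPolynomial.map φ p) ∘ genericLinearForm k n d)
      = fun j => genericLinearForm k n d (σ j) from
    funext fun j => map_rename_genericLinearForm σ j]
  conv_rhs => rw [← Multiset.map_univ_val_equiv σ]
  rw [Multiset.map_map]
  rfl

end Invariance

end ChowAux

/-- the coordinates (coefficients in `u`) of `c₁,…,cₙ` generate the invariant
ring `k[Vⁿ]^{𝔖ₙ}` as a `k`-algebra; equivalently, `Chowⁿ(V) → V × S²V × ⋯ × SⁿV` is a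
closed embedding. -/
theorem chow_closed_embedding (k : Type*) [Field k] [IsAlgClosed k] [CharZero k]
    (n d : ℕ) :
    Algebra.adjoin k
        {r : MvPolynomial (Fin n × Fin d) k |
          ∃ i ∈ Finset.Icc 1 n, ∃ m : (Fin d) →₀ ℕ,
            r = MvPolynomial.coeff m (chowESymm k n d i)} =
      chowInvariants k n d := by
  apply le_antisymm
  · rw [Algebra.adjoin_le_iff]
    rintro r ⟨i, hi, m, rfl⟩
    exact fun σ => ChowAux.chowESymm_invariant σ i m
  · have hgen : ∀ i ∈ Finset.Icc 1 n, ∀ m : Fin d →₀ ℕ,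
        MvPolynomial.coeff m (chowESymm k n d i) ∈
          Algebra.adjoin k
            {r : MvPolynomial (Fin n × Fin d) k |
              ∃ i ∈ Finset.Icc 1 n, ∃ m : (Fin d) →₀ ℕ,
                r = MvPolynomial.coeff m (chowESymm k n d i)} :=
      fun i hi m => Algebra.subset_adjoin ⟨i, hi, m, rfl⟩
    exact ChowAux.invariants_le _ (fun a ha => ChowAux.polSum_mem _ hgen a ha)
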